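/- Let φ : ℝ → ℂ be a continuously differentiable function and C > 0 a constant such that |φ(x)| ≤ C/(1 + |x|) and |φ'(x)| ≤ C/(1 + |x|)² for all x ∈ ℝ. Then the function (x, y) ↦ (φ(x) − φ(y))/(x − y), defined for x ≠ y, is square integrable on ℝ², i.e. ∫_{ℝ}∫_{ℝ} |(φ(x) − φ(y))/(x − y)|² dx dy < ∞. -/

import Mathlib

open MeasureTheory

private lemma contA' : Continuous (fun t : ℝ => ((1 + |t|) ^ 2)⁻¹) :=
  ((continuous_const.add continuous_abs).pow 2).inv₀ (fun t => show ((1:ℝ) + |t|) ^ 2 ≠ 0 by positivity)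

private lemma contM' : Continuous (fun s : ℝ => 2 * (1 + s ^ 2)⁻¹) :=
  continuous_const.mul ((continuous_const.add (continuous_pow 2)).inv₀
    (fun s => show (1:ℝ) + s ^ 2 ≠ 0 by positivity))

private lemma intA' : Integrable (fun t : ℝ => ((1 + |t|) ^ 2)⁻¹) := by
  refine integrable_inv_one_add_sq.mono' contA'.aestronglyMeasurable ?_
  filter_upwards with t
  rw [Real.norm_of_nonneg (by positivity)]
  apply inv_anti₀ (by positivity)
  nlinarith [abs_nonneg t, sq_abs t]

private lemma intM' : Integrable (fun s : ℝ => 2 * (1 + s ^ 2)⁻¹) :=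
  integrable_inv_one_add_sq.const_mul 2

private lemma int_h' : Integrable
    (fun p : ℝ × ℝ => ((1 + |p.1|) ^ 2)⁻¹ * (2 * (1 + (p.1 - p.2) ^ 2)⁻¹)) := by
  rw [show (volume : Measure (ℝ × ℝ)) = volume.prod volume from Measure.volume_eq_prod ℝ ℝ]
  have hmeas : AEStronglyMeasurable
      (fun p : ℝ × ℝ => ((1 + |p.1|) ^ 2)⁻¹ * (2 * (1 + (p.1 - p.2) ^ 2)⁻¹))
      (volume.prod volume) :=
    ((contA'.comp continuous_fst).mul
      (contM'.comp (continuous_fst.sub continuous_snd))).aestronglyMeasurable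
  rw [integrable_prod_iff hmeas]
  constructor
  · filter_upwards with x
    exact (intM'.comp_sub_left x).const_mul _
  · have : (fun x : ℝ => ∫ y : ℝ, ‖((1 + |x|) ^ 2)⁻¹ * (2 * (1 + (x - y) ^ 2)⁻¹)‖)
        = fun x : ℝ => ((1 + |x|) ^ 2)⁻¹ * ∫ s : ℝ, 2 * (1 + s ^ 2)⁻¹ := by
      funext x
      rw [← integral_sub_left_eq_self (fun s => 2 * (1 + s ^ 2)⁻¹) volume x, ← integral_const_mul]
      congr 1; funext y
      rw [Real.norm_of_nonneg (by positivity)]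
    rw [this]
    exact intA'.mul_const _

private lemma int_h2' : Integrable
    (fun p : ℝ × ℝ => ((1 + |p.2|) ^ 2)⁻¹ * (2 * (1 + (p.1 - p.2) ^ 2)⁻¹)) := by
  rw [show (volume : Measure (ℝ × ℝ)) = volume.prod volume from Measure.volume_eq_prod ℝ ℝ]
  have h := int_h'
  rw [show (volume : Measure (ℝ × ℝ)) = volume.prod volume from Measure.volume_eq_prod ℝ ℝ] at h
  have h2 := h.swap
  have : (fun p : ℝ × ℝ => ((1 + |p.1|) ^ 2)⁻¹ * (2 * (1 + (p.1 - p.2) ^ 2)⁻¹)) ∘ Prod.swap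
      = fun p : ℝ × ℝ => ((1 + |p.2|) ^ 2)⁻¹ * (2 * (1 + (p.1 - p.2) ^ 2)⁻¹) := by
    funext p
    simp only [Function.comp_apply, Prod.fst_swap, Prod.snd_swap]
    rw [show (p.2 - p.1) ^ 2 = (p.1 - p.2) ^ 2 by ring]
  rwa [this] at h2

private lemma key' (φ : ℝ → ℂ) (C : ℝ) (hC : 0 < C) (hφ : ContDiff ℝ 1 φ)
    (h2 : ∀ x : ℝ, ‖deriv φ x‖ ≤ C / (1 + |x|) ^ 2) (x y : ℝ) (hxy : |x - y| ≤ 1) :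
    ‖φ x - φ y‖ ≤ 2 * C / (1 + |x|) * |x - y| := by
  have hdiff : ∀ t ∈ Set.uIcc y x, DifferentiableAt ℝ φ t :=
    fun t _ => (hφ.differentiable one_ne_zero).differentiableAt
  have hbound : ∀ t ∈ Set.uIcc y x, ‖deriv φ t‖ ≤ 2 * C / (1 + |x|) := by
    intro t ht
    have h4 : |x - t| ≤ |x - y| := by
      have := Set.abs_sub_right_of_mem_uIcc ht; simpa using this
    have h5 : |x| ≤ |t| + 1 := by
      have := abs_sub_abs_le_abs_sub x t
      linarith [h4.trans hxy]
    refine (h2 t).trans ?_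
    rw [div_le_div_iff₀ (by positivity) (by positivity)]
    nlinarith [abs_nonneg t, abs_nonneg x, hC.le, sq_nonneg (|t|)]
  have := Convex.norm_image_sub_le_of_norm_deriv_le hdiff hbound (convex_uIcc y x)
    Set.left_mem_uIcc Set.right_mem_uIcc
  simpa [Real.norm_eq_abs] using this

private lemma ptbound' (φ : ℝ → ℂ) (C : ℝ) (hC : 0 < C)
    (h1 : ∀ x : ℝ, ‖φ x‖ ≤ C / (1 + |x|))
    (key : ∀ x y : ℝ, |x - y| ≤ 1 → ‖φ x - φ y‖ ≤ 2 * C / (1 + |x|) * |x - y|)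
    (x y : ℝ) :
    ‖(φ x - φ y) / ((x : ℂ) - (y : ℂ))‖ ^ 2 ≤
      4 * C ^ 2 * (((1 + |x|) ^ 2)⁻¹ * (2 * (1 + (x - y) ^ 2)⁻¹)) +
      4 * C ^ 2 * (((1 + |y|) ^ 2)⁻¹ * (2 * (1 + (x - y) ^ 2)⁻¹)) := by
  rcases eq_or_ne x y with h | h
  · subst h
    simp only [sub_self, zero_div, norm_zero]
    norm_num
    positivity
  have hs : (0:ℝ) < |x - y| := abs_pos.mpr (sub_ne_zero.mpr h)
  have hd : ((x:ℂ) - (y:ℂ)) = ((x - y : ℝ) : ℂ) := by push_cast; ring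
  have hnorm : ‖(φ x - φ y) / ((x : ℂ) - (y : ℂ))‖ = ‖φ x - φ y‖ / |x - y| := by
    rw [norm_div, hd, Complex.norm_real, Real.norm_eq_abs]
  rw [hnorm]
  set a : ℝ := 1 + |x| with ha
  set b : ℝ := 1 + |y| with hb
  have hap : (0:ℝ) < a := by positivity
  have hbp : (0:ℝ) < b := by positivity
  rcases le_or_gt (|x - y|) 1 with hle | hlt
  · have hD : ‖φ x - φ y‖ / |x - y| ≤ 2 * C / a := by
      rw [div_le_iff₀ hs]; exact key x y hle
    have hD2 : (‖φ x - φ y‖ / |x - y|) ^ 2 ≤ (2 * C / a) ^ 2 :=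
      pow_le_pow_left₀ (by positivity) hD 2
    have hM1 : (1:ℝ) ≤ 2 * (1 + (x - y) ^ 2)⁻¹ := by
      rw [show (2:ℝ) * (1 + (x - y) ^ 2)⁻¹ = 2 / (1 + (x - y) ^ 2) by ring,
        le_div_iff₀ (by positivity)]
      nlinarith [sq_abs (x - y)]
    have heq : (2 * C / a) ^ 2 = 4 * C ^ 2 * (a ^ 2)⁻¹ := by
      field_simp; ring
    calc (‖φ x - φ y‖ / |x - y|) ^ 2 ≤ 4 * C ^ 2 * (a ^ 2)⁻¹ := by rw [← heq]; exact hD2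
      _ = 4 * C ^ 2 * ((a ^ 2)⁻¹ * 1) := by ring
      _ ≤ 4 * C ^ 2 * ((a ^ 2)⁻¹ * (2 * (1 + (x - y) ^ 2)⁻¹)) := by
          refine mul_le_mul_of_nonneg_left ?_ (by positivity)
          exact mul_le_mul_of_nonneg_left hM1 (by positivity)
      _ ≤ _ := le_add_of_nonneg_right (by positivity)
  · have hnum : ‖φ x - φ y‖ ≤ C / a + C / b :=
      (norm_sub_le _ _).trans (add_le_add (h1 x) (h1 y))
    have hD : ‖φ x - φ y‖ / |x - y| ≤ (C / a + C / b) / |x - y| :=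
      div_le_div_of_nonneg_right hnum hs.le |>.trans_eq rfl
    have hD2 : (‖φ x - φ y‖ / |x - y|) ^ 2 ≤ ((C / a + C / b) / |x - y|) ^ 2 :=
      pow_le_pow_left₀ (by positivity) hD 2
    have heq : ((C / a + C / b) / |x - y|) ^ 2 = (C / a + C / b) ^ 2 * ((x - y) ^ 2)⁻¹ := by
      rw [div_pow, sq_abs, div_eq_mul_inv]
    have hsum : (C / a + C / b) ^ 2 ≤ 2 * C ^ 2 * ((a ^ 2)⁻¹ + (b ^ 2)⁻¹) := by
      have hu : (C / a) ^ 2 = C ^ 2 * (a ^ 2)⁻¹ := by rw [div_pow, div_eq_mul_inv]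
      have hv : (C / b) ^ 2 = C ^ 2 * (b ^ 2)⁻¹ := by rw [div_pow, div_eq_mul_inv]
      nlinarith [sq_nonneg (C / a - C / b)]
    have hinv : ((x - y) ^ 2)⁻¹ ≤ 2 * (1 + (x - y) ^ 2)⁻¹ := by
      rw [show (2:ℝ) * (1 + (x - y) ^ 2)⁻¹ = 2 / (1 + (x - y) ^ 2) by ring,
        inv_eq_one_div, div_le_div_iff₀ (by nlinarith [sq_abs (x-y)]) (by positivity)]
      nlinarith [sq_abs (x - y)]
    have hAx : (0:ℝ) ≤ (a ^ 2)⁻¹ := by positivity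
    have hAy : (0:ℝ) ≤ (b ^ 2)⁻¹ := by positivity
    have hM : (0:ℝ) ≤ 2 * (1 + (x - y) ^ 2)⁻¹ := by positivity
    calc (‖φ x - φ y‖ / |x - y|) ^ 2
        ≤ (C / a + C / b) ^ 2 * ((x - y) ^ 2)⁻¹ := by rw [← heq]; exact hD2
      _ ≤ 2 * C ^ 2 * ((a ^ 2)⁻¹ + (b ^ 2)⁻¹) * ((x - y) ^ 2)⁻¹ :=
          mul_le_mul_of_nonneg_right hsum (by positivity)
      _ ≤ 2 * C ^ 2 * ((a ^ 2)⁻¹ + (b ^ 2)⁻¹) * (2 * (1 + (x - y) ^ 2)⁻¹) :=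
          mul_le_mul_of_nonneg_left hinv (by positivity)
      _ ≤ _ := by nlinarith [mul_nonneg (mul_nonneg (sq_nonneg C) hAx) hM,
          mul_nonneg (mul_nonneg (sq_nonneg C) hAy) hM]

/-- If `φ : ℝ → ℂ` is continuously differentiable with `|φ(x)| ≤ C/(1+|x|)` and
`|φ'(x)| ≤ C/(1+|x|)²`, then the divided difference `(φ(x)-φ(y))/(x-y)` is square
integrable on `ℝ²`. -/
theorem stmt7 (φ : ℝ → ℂ) (C : ℝ) (hC : 0 < C) (hφ : ContDiff ℝ 1 φ)
    (h1 : ∀ x : ℝ, ‖φ x‖ ≤ C / (1 + |x|))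
    (h2 : ∀ x : ℝ, ‖deriv φ x‖ ≤ C / (1 + |x|) ^ 2) :
    MeasureTheory.Integrable
      (fun p : ℝ × ℝ => ‖(φ p.1 - φ p.2) / ((p.1 : ℂ) - (p.2 : ℂ))‖ ^ 2) := by
  have hg : Integrable (fun p : ℝ × ℝ =>
      4 * C ^ 2 * (((1 + |p.1|) ^ 2)⁻¹ * (2 * (1 + (p.1 - p.2) ^ 2)⁻¹)) +
      4 * C ^ 2 * (((1 + |p.2|) ^ 2)⁻¹ * (2 * (1 + (p.1 - p.2) ^ 2)⁻¹))) :=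
    (int_h'.const_mul _).add (int_h2'.const_mul _)
  have hφc : Continuous φ := hφ.continuous
  have hmeas : Measurable
      (fun p : ℝ × ℝ => ‖(φ p.1 - φ p.2) / ((p.1 : ℂ) - (p.2 : ℂ))‖ ^ 2) := by
    apply Measurable.pow_const
    apply Measurable.norm
    exact ((hφc.measurable.comp measurable_fst).sub
        (hφc.measurable.comp measurable_snd)).div
      ((Complex.measurable_ofReal.comp measurable_fst).sub
        (Complex.measurable_ofReal.comp measurable_snd))
  refine hg.mono' hmeas.aestronglyMeasurable ?_
  filter_upwards with p
  rw [Real.norm_of_nonneg (by positivity)]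
  exact ptbound' φ C hC h1 (key' φ C hC hφ h2) p.1 p.2
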